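/- Consider a test-time compute game with N providers. There exists a finite rationality level β_0 > 0 such that for all β > β_0, any pure Nash equilibrium of the game with boundedly rational users (softmax market shares with inverse temperature β) is also a pure Nash equilibrium of the game with perfectly rational users (winner-take-all market shares). -/
import Mathlib


open scoped Classical

/-- Utility of provider `i` under bounded rationality `β`: softmax market share
`exp(βV_i(θ_i)) / (1 + ∑_j exp(βV_j(θ_j)))` (abstention value `V₀ = 0`) times the profit
`p_i(θ_i) − c_i(θ_i)`, with `V_i(θ) = q_i(θ) − p_i(θ)`. -/
noncomputable def boundedU (N : ℕ) (Θ : Type*) [Fintype Θ] (p c q : Fin N → Θ → ℝ)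
    (β : ℝ) (i : Fin N) (θv : Fin N → Θ) : ℝ :=
  (Real.exp (β * (q i (θv i) - p i (θv i))) /
      (1 + ∑ j, Real.exp (β * (q j (θv j) - p j (θv j)))))
    * (p i (θv i) - c i (θv i))

/-- Utility of provider `i` under perfect rationality: winner-take-all market share
`𝟙{V_i(θ_i) > max_{j ≠ i} V_j(θ_j)}` times the profit. -/
noncomputable def perfectU (N : ℕ) (Θ : Type*) (p c q : Fin N → Θ → ℝ)
    (i : Fin N) (θv : Fin N → Θ) : ℝ :=
  (if ∀ j, j ≠ i → q j (θv j) - p j (θv j) < q i (θv i) - p i (θv i)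
    then (1 : ℝ) else 0) * (p i (θv i) - c i (θv i))

open Filter

private lemma exp_mul_tendsto_zero {d : ℝ} (hd : d < 0) :
    Tendsto (fun β : ℝ => Real.exp (β * d)) atTop (nhds 0) :=
  Real.tendsto_exp_atBot.comp (tendsto_id.atTop_mul_const_of_neg hd)

/-- Softmax share tends to the winner-take-all indicator. -/
private lemma share_tendsto {N : ℕ} (V : Fin N → ℝ) (i : Fin N)
    (hpos : ∀ j, 0 < V j) (hne : ∀ j, j ≠ i → V j ≠ V i) :
    Tendsto (fun β : ℝ => Real.exp (β * V i) / (1 + ∑ j, Real.exp (β * V j))) atTop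
      (nhds (if ∀ j, j ≠ i → V j < V i then 1 else 0)) := by
  by_cases hwin : ∀ j, j ≠ i → V j < V i
  · rw [if_pos hwin]
    have key : ∀ β : ℝ, Real.exp (β * V i) / (1 + ∑ j, Real.exp (β * V j))
        = 1 / (Real.exp (-(β * V i)) + ∑ j, Real.exp (β * (V j - V i))) := by
      intro β
      have hden : Real.exp (-(β * V i)) + ∑ j, Real.exp (β * (V j - V i))
          = (1 + ∑ j, Real.exp (β * V j)) * Real.exp (-(β * V i)) := by
        rw [add_mul, one_mul, Finset.sum_mul]
        congr 1
        refine Finset.sum_congr rfl fun j _ => ?_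
        rw [← Real.exp_add]; congr 1; ring
      have hS : (0:ℝ) < 1 + ∑ j, Real.exp (β * V j) := by positivity
      rw [hden, Real.exp_neg]
      field_simp
    simp only [key]
    have hden_lim : Tendsto (fun β : ℝ =>
        Real.exp (-(β * V i)) + ∑ j, Real.exp (β * (V j - V i))) atTop (nhds 1) := by
      have h1 : Tendsto (fun β : ℝ => Real.exp (-(β * V i))) atTop (nhds 0) := by
        have := exp_mul_tendsto_zero (d := -V i) (by linarith [hpos i])
        simpa [mul_neg] using this
      have h2 : Tendsto (fun β : ℝ => ∑ j, Real.exp (β * (V j - V i))) atTop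
          (nhds (∑ j : Fin N, if j = i then 1 else 0)) := by
        refine tendsto_finset_sum _ fun j _ => ?_
        by_cases hj : j = i
        · subst hj; simp
        · rw [if_neg hj]
          exact exp_mul_tendsto_zero (by have := hwin j hj; linarith)
      have hsum : (∑ j : Fin N, if j = i then (1:ℝ) else 0) = 1 := by
        simp [Finset.sum_ite_eq']
      rw [hsum] at h2
      simpa using h1.add h2
    simp only [one_div]
    simpa using hden_lim.inv₀ one_ne_zero
  · rw [if_neg hwin]
    push_neg at hwin
    obtain ⟨j₀, hj₀ne, hj₀ge⟩ := hwin
    have hj₀ : V i < V j₀ := lt_of_le_of_ne hj₀ge (fun h => hne j₀ hj₀ne h.symm)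
    refine squeeze_zero (fun β => ?_) (fun β => ?_)
      (g := fun β => Real.exp (β * (V i - V j₀))) ?_
    · positivity
    · have hden : Real.exp (β * V j₀) ≤ 1 + ∑ j, Real.exp (β * V j) := by
        have h1 : Real.exp (β * V j₀) ≤ ∑ j, Real.exp (β * V j) :=
          Finset.single_le_sum (f := fun j => Real.exp (β * V j))
            (fun j _ => (Real.exp_pos _).le) (Finset.mem_univ j₀)
        linarith
      calc Real.exp (β * V i) / (1 + ∑ j, Real.exp (β * V j))
          ≤ Real.exp (β * V i) / Real.exp (β * V j₀) :=
            div_le_div_of_nonneg_left (Real.exp_pos _).le (Real.exp_pos _) hden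
        _ = Real.exp (β * (V i - V j₀)) := by rw [← Real.exp_sub]; congr 1; ring
    · exact exp_mul_tendsto_zero (by linarith)

private lemma boundedU_tendsto (N : ℕ) (Θ : Type*) [Fintype Θ] (p c q : Fin N → Θ → ℝ)
    (hties : ∀ (i j : Fin N) (t t' : Θ), i ≠ j → q i t - p i t ≠ q j t' - p j t')
    (hV₀ : ∀ (i : Fin N) (t : Θ), 0 < q i t - p i t)
    (i : Fin N) (θv : Fin N → Θ) :
    Tendsto (fun β : ℝ => boundedU N Θ p c q β i θv) atTop
      (nhds (perfectU N Θ p c q i θv)) := by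
  have h := (share_tendsto (fun j => q j (θv j) - p j (θv j)) i
    (fun j => hV₀ j (θv j))
    (fun j hj => hties j i (θv j) (θv i) hj)).mul_const (p i (θv i) - c i (θv i))
  exact h

/-- **High-rationality equilibria are perfect-rationality equilibria.** For a test-time
compute game with no ties in offered values and positive profits, there is a finite
rationality level `β₀ > 0` such that for all `β > β₀`, any pure Nash equilibrium of the
game with boundedly rational users is also a pure Nash equilibrium of the game with
perfectly rational users. -/
theorem high_rationality_equilibria (N : ℕ) (Θ : Type*) [Fintype Θ] [Nonempty Θ]
    (p c q : Fin N → Θ → ℝ)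
    (hties : ∀ (i j : Fin N) (t t' : Θ), i ≠ j → q i t - p i t ≠ q j t' - p j t')
    (hprofit : ∀ (i : Fin N) (t : Θ), 0 < p i t - c i t)
    (hV₀ : ∀ (i : Fin N) (t : Θ), 0 < q i t - p i t) :
    ∃ β₀ : ℝ, 0 < β₀ ∧ ∀ β : ℝ, β₀ < β →
      ∀ θd : Fin N → Θ,
        (∀ (i : Fin N) (t' : Θ),
          boundedU N Θ p c q β i (Function.update θd i t') ≤ boundedU N Θ p c q β i θd) →
        (∀ (i : Fin N) (t' : Θ),
          perfectU N Θ p c q i (Function.update θd i t') ≤ perfectU N Θ p c q i θd) := by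
  have hev : ∀ᶠ β : ℝ in atTop, ∀ x : (Fin N → Θ) × Fin N × Θ,
      perfectU N Θ p c q x.2.1 x.1 < perfectU N Θ p c q x.2.1 (Function.update x.1 x.2.1 x.2.2) →
      boundedU N Θ p c q β x.2.1 x.1 < boundedU N Θ p c q β x.2.1 (Function.update x.1 x.2.1 x.2.2) := by
    rw [eventually_all]
    rintro ⟨θd, i, t'⟩
    by_cases hlt : perfectU N Θ p c q i θd <
        perfectU N Θ p c q i (Function.update θd i t')
    · have h1 := boundedU_tendsto N Θ p c q hties hV₀ i θd
      have h2 := boundedU_tendsto N Θ p c q hties hV₀ i (Function.update θd i t')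
      filter_upwards [h1.eventually_lt h2 hlt] with β hβ _ using hβ
    · filter_upwards with β h; exact absurd h hlt
  obtain ⟨a, ha⟩ := eventually_atTop.mp hev
  refine ⟨max a 1, lt_of_lt_of_le one_pos (le_max_right a 1), fun β hβ θd hNE i t' => ?_⟩
  by_contra hcon
  push_neg at hcon
  have := ha β (le_of_lt (lt_of_le_of_lt (le_max_left a 1) hβ)) (θd, i, t') hcon
  exact absurd (hNE i t') (not_le.mpr this)
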